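/- Let E be a measurable space, μ a probability measure on E, and (κ_t)_{t≥0} a semigroup of Markov kernels on E with μ invariant for every κ_t, acting on bounded measurable functions by (P_t f)(x) = ∫_E f(y) κ_t(x,dy). Fix 1 < p < q < ∞ and suppose there exists t̃₀ > 0 such that ‖P_{t̃₀} f‖_{L^q(μ)} ≤ ‖f‖_{L^p(μ)} for every bounded measurable f (hypercontractivity). Then there exist constants c̃, λ̃ > 0, depending only on t̃₀, p and q, such that for every bounded measurable f : E → ℝ with f > 0 and μ(f) = 1, and every t ≥ 0, one has ∫_E (P_t f) log(P_t f) dμ ≤ c̃ e^{−λ̃ t} ∫_E f log f dμ. -/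

import Mathlib

open MeasureTheory ProbabilityTheory
open scoped ENNReal NNReal

/-- A bounded measurable real-valued function. -/
def BddMeasurableFn {E : Type*} [MeasurableSpace E] (f : E → ℝ) : Prop :=
  Measurable f ∧ ∃ C : ℝ, ∀ x, |f x| ≤ C

/-- The action of a kernel on a function: `(P f)(x) = ∫ f(y) κ(x,dy)`. -/
noncomputable def kernelOp {E : Type*} [MeasurableSpace E] (κ : Kernel E E) (f : E → ℝ)
    (x : E) : ℝ := ∫ y, f y ∂(κ x)

/-- `(κ t)_{t ≥ 0}` is a semigroup of Markov kernels. -/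
structure IsMarkovSemigroup {E : Type*} [MeasurableSpace E] (κ : ℝ → Kernel E E) : Prop where
  markov : ∀ t : ℝ, IsMarkovKernel (κ t)
  id_zero : κ 0 = Kernel.id
  semigroup : ∀ s t : ℝ, 0 ≤ s → 0 ≤ t → κ (t + s) = (κ t) ∘ₖ (κ s)


section AuxStatement1
set_option maxHeartbeats 1000000
open Filter
open scoped Topology


/- elementary real inequalities -/

lemma exp_sub_one_le_mul_exp (t : ℝ) (ht : 0 ≤ t) : Real.exp t - 1 ≤ t * Real.exp t := by
  have h1 := Real.add_one_le_exp (-t)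
  have h2 : Real.exp (-t) = (Real.exp t)⁻¹ := Real.exp_neg t
  have h3 := Real.exp_pos t
  rw [h2] at h1
  have h4 : (1 - t) * Real.exp t ≤ 1 := by
    rw [sub_mul, one_mul]
    have := mul_le_mul_of_nonneg_right h1 h3.le
    rw [inv_mul_cancel₀ h3.ne'] at this
    linarith
  nlinarith

lemma one_sub_exp_le_neg (t : ℝ) : 1 - Real.exp t ≤ -t := by
  have := Real.add_one_le_exp t; linarith

lemma neg_mul_log_le_one {x : ℝ} (hx : 0 < x) (hx1 : x ≤ 1) : x * (-Real.log x) ≤ 1 := by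
  have h1 : Real.log x⁻¹ ≤ x⁻¹ - 1 := Real.log_le_sub_one_of_pos (by positivity)
  rw [Real.log_inv] at h1
  have := mul_le_mul_of_nonneg_left h1 hx.le
  calc x * (-Real.log x) ≤ x * (x⁻¹ - 1) := this
    _ = 1 - x := by field_simp
    _ ≤ 1 := by linarith

lemma abs_mul_log_le {x C : ℝ} (hx : 0 < x) (hxC : x ≤ C) (h1C : 1 ≤ C) :
    |x * Real.log x| ≤ C * C := by
  rcases le_or_gt x 1 with h | h
  · have hlog : Real.log x ≤ 0 := Real.log_nonpos hx.le h
    have : |x * Real.log x| = x * (-Real.log x) := by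
      rw [abs_of_nonpos (mul_nonpos_of_nonneg_of_nonpos hx.le hlog)]; ring
    rw [this]
    calc x * (-Real.log x) ≤ 1 := neg_mul_log_le_one hx h
      _ ≤ C * C := by nlinarith
  · have hlog : 0 ≤ Real.log x := Real.log_nonneg h.le
    rw [abs_of_nonneg (mul_nonneg (by positivity) hlog)]
    have h2 : Real.log x ≤ C - 1 := by
      calc Real.log x ≤ x - 1 := Real.log_le_sub_one_of_pos hx
        _ ≤ C - 1 := by linarith
    nlinarith


lemma rpow_eq_mul_exp {x : ℝ} (hx : 0 < x) (r : ℝ) :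
    x ^ r = x * Real.exp ((r - 1) * Real.log x) := by
  rw [Real.rpow_def_of_pos hx,
    show Real.log x * r = Real.log x + (r - 1) * Real.log x by ring,
    Real.exp_add, Real.exp_log hx]

/-- `x^r ≥ x + (r-1) x log x` for `x > 0`. -/
lemma rpow_ge_add_mul_log {x : ℝ} (hx : 0 < x) (r : ℝ) :
    x + (r - 1) * (x * Real.log x) ≤ x ^ r := by
  rw [rpow_eq_mul_exp hx r]
  have h2 : 1 + (r - 1) * Real.log x ≤ Real.exp ((r - 1) * Real.log x) := by
    have := Real.add_one_le_exp ((r - 1) * Real.log x); linarith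
  calc x + (r - 1) * (x * Real.log x) = x * (1 + (r - 1) * Real.log x) := by ring
    _ ≤ x * Real.exp ((r - 1) * Real.log x) := by
        exact mul_le_mul_of_nonneg_left h2 hx.le

/-- `x log x ≥ x - 1` for `x > 0`. -/
lemma sub_one_le_mul_log {x : ℝ} (hx : 0 < x) : x - 1 ≤ x * Real.log x := by
  have h1 : Real.log x⁻¹ ≤ x⁻¹ - 1 := Real.log_le_sub_one_of_pos (by positivity)
  rw [Real.log_inv] at h1
  have := mul_le_mul_of_nonneg_left h1 hx.le
  have h2 : x * (x⁻¹ - 1) = 1 - x := by field_simp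
  nlinarith [this, h2]

/-- dominating bound for the difference quotient. -/
lemma abs_rpow_sub_le {x C r : ℝ} (hx : 0 < x) (hxC : x ≤ C) (h1C : 1 ≤ C)
    (hr : 1 < r) (hr2 : r ≤ 2) :
    |x ^ r - x| ≤ (r - 1) * (1 + C * C * C) := by
  have hs : 0 < r - 1 := by linarith
  rcases le_or_gt x 1 with h | h
  · -- x ≤ 1 : x^r ≤ x, and x - x^r ≤ (r-1) * x * (-log x) ≤ r - 1
    have hle : x ^ r ≤ x := by
      calc x ^ r ≤ x ^ (1:ℝ) := Real.rpow_le_rpow_of_exponent_ge hx h (by linarith)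
        _ = x := Real.rpow_one x
    have habs : |x ^ r - x| = x - x ^ r := by
      rw [abs_of_nonpos (by linarith)]; ring
    rw [habs]
    have hxr : x ^ r = x * Real.exp ((r - 1) * Real.log x) := rpow_eq_mul_exp hx r
    have key : x - x ^ r ≤ (r - 1) * (x * (-Real.log x)) := by
      rw [hxr]
      have h2 : 1 - Real.exp ((r - 1) * Real.log x) ≤ -((r - 1) * Real.log x) :=
        one_sub_exp_le_neg _
      calc x - x * Real.exp ((r - 1) * Real.log x)
          = x * (1 - Real.exp ((r - 1) * Real.log x)) := by ring
        _ ≤ x * (-((r - 1) * Real.log x)) := mul_le_mul_of_nonneg_left h2 hx.le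
        _ = (r - 1) * (x * (-Real.log x)) := by ring
    calc x - x ^ r ≤ (r - 1) * (x * (-Real.log x)) := key
      _ ≤ (r - 1) * 1 := by
          exact mul_le_mul_of_nonneg_left (neg_mul_log_le_one hx h) hs.le
      _ ≤ (r - 1) * (1 + C * C * C) := by
          have h4 : (1:ℝ) ≤ 1 + C * C * C := by nlinarith
          exact mul_le_mul_of_nonneg_left h4 hs.le
  · -- 1 < x : x ≤ x^r, and x^r - x ≤ (r-1) x log x x^{r-1} ≤ (r-1) C³
    have hge : x ≤ x ^ r := by
      calc x = x ^ (1:ℝ) := (Real.rpow_one x).symm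
        _ ≤ x ^ r := Real.rpow_le_rpow_of_exponent_le h.le (by linarith)
    have habs : |x ^ r - x| = x ^ r - x := abs_of_nonneg (by linarith)
    rw [habs]
    have hlog : 0 ≤ Real.log x := Real.log_nonneg h.le
    have hxr : x ^ r = x * Real.exp ((r - 1) * Real.log x) := rpow_eq_mul_exp hx r
    have ht : 0 ≤ (r - 1) * Real.log x := mul_nonneg hs.le hlog
    have h2 : Real.exp ((r - 1) * Real.log x) - 1 ≤
        ((r - 1) * Real.log x) * Real.exp ((r - 1) * Real.log x) :=
      exp_sub_one_le_mul_exp _ ht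
    have hexp : Real.exp ((r - 1) * Real.log x) = x ^ (r - 1) := by
      rw [Real.rpow_def_of_pos hx]; congr 1; ring
    have hxr1 : x ^ (r - 1) ≤ C := by
      calc x ^ (r - 1) ≤ x ^ (1:ℝ) := Real.rpow_le_rpow_of_exponent_le h.le (by linarith)
        _ = x := Real.rpow_one x
        _ ≤ C := hxC
    have hlogC : Real.log x ≤ C := by
      calc Real.log x ≤ x - 1 := Real.log_le_sub_one_of_pos hx
        _ ≤ C := by linarith
    have hxpos : (0:ℝ) ≤ x := hx.le
    calc x ^ r - x = x * (Real.exp ((r - 1) * Real.log x) - 1) := by rw [hxr]; ring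
      _ ≤ x * (((r - 1) * Real.log x) * Real.exp ((r - 1) * Real.log x)) :=
          mul_le_mul_of_nonneg_left h2 hxpos
      _ = (r - 1) * (x * Real.log x * x ^ (r - 1)) := by rw [hexp]; ring
      _ ≤ (r - 1) * (C * C * C) := by
          have h3 : x * Real.log x * x ^ (r - 1) ≤ C * C * C := by
            have hrp : (0:ℝ) ≤ x ^ (r - 1) := Real.rpow_nonneg hxpos _
            have hC0 : (0:ℝ) ≤ C := by linarith
            have a1 : x * Real.log x ≤ C * C :=
              mul_le_mul hxC hlogC hlog hC0
            exact mul_le_mul a1 hxr1 hrp (by nlinarith)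
          exact mul_le_mul_of_nonneg_left h3 hs.le
      _ ≤ (r - 1) * (1 + C * C * C) := by
          have h4 : C * C * C ≤ 1 + C * C * C := by linarith
          exact mul_le_mul_of_nonneg_left h4 hs.le


/-- difference quotient of `r ↦ v^r` at `r = 1` converges to `v log v`. -/
lemma tendsto_rpow_slope {v : ℝ} (hv : 0 < v) {s : ℕ → ℝ} (hs : Tendsto s atTop (𝓝 0))
    (hs0 : ∀ n, s n ≠ 0) :
    Tendsto (fun n => (v ^ (1 + s n) - v) / s n) atTop (𝓝 (v * Real.log v)) := by
  have hderiv : HasDerivAt (fun t : ℝ => Real.exp (t * Real.log v)) (Real.log v) 0 := by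
    have h1 : HasDerivAt (fun t : ℝ => t * Real.log v) (Real.log v) 0 :=
      hasDerivAt_mul_const _
    have h2 := h1.exp
    simpa using h2
  have hslope := hasDerivAt_iff_tendsto_slope.mp hderiv
  have hsin : Tendsto s atTop (𝓝[≠] (0:ℝ)) :=
    tendsto_nhdsWithin_of_tendsto_nhds_of_eventually_within s hs
      (Eventually.of_forall fun n => hs0 n)
  have hcomp := hslope.comp hsin
  have heq : ∀ n, slope (fun t : ℝ => Real.exp (t * Real.log v)) 0 (s n)
      = (Real.exp (s n * Real.log v) - 1) / s n := by
    intro n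
    rw [slope_def_field]
    simp [Real.exp_zero]
  have hcomp' : Tendsto (fun n => (Real.exp (s n * Real.log v) - 1) / s n) atTop
      (𝓝 (Real.log v)) := by
    refine hcomp.congr fun n => ?_
    exact (heq n)
  have := hcomp'.const_mul v
  refine this.congr fun n => ?_
  have hvs : v ^ (1 + s n) = v * Real.exp (s n * Real.log v) := by
    rw [Real.rpow_def_of_pos hv,
      show Real.log v * (1 + s n) = Real.log v + s n * Real.log v by ring,
      Real.exp_add, Real.exp_log hv]
  rw [hvs, mul_div_assoc', mul_sub, mul_one]
section KernelBasics

variable {E : Type*} [MeasurableSpace E]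

lemma integrable_of_bddMeas {ν : Measure E} [IsFiniteMeasure ν] {f : E → ℝ} {C : ℝ}
    (hf : Measurable f) (hC : ∀ x, |f x| ≤ C) : Integrable f ν :=
  ⟨hf.aestronglyMeasurable,
    HasFiniteIntegral.of_bounded (C := C) (Eventually.of_forall (by simpa [Real.norm_eq_abs] using hC))⟩

lemma kernelOp_measurable (κ : Kernel E E) [IsSFiniteKernel κ] {f : E → ℝ}
    (hf : Measurable f) : Measurable (kernelOp κ f) := by
  have h : StronglyMeasurable (Function.uncurry (fun (_ : E) (y : E) => f y)) :=
    hf.stronglyMeasurable.comp_measurable measurable_snd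
  exact (h.integral_kernel_prod_right (κ := κ)).measurable

lemma kernelOp_abs_le (κ : Kernel E E) [IsMarkovKernel κ] {f : E → ℝ} {C : ℝ}
    (hC : ∀ x, |f x| ≤ C) (x : E) : |kernelOp κ f x| ≤ C := by
  have h := norm_integral_le_of_norm_le_const (μ := κ x) (f := f) (C := C)
    (Eventually.of_forall (by simpa [Real.norm_eq_abs] using hC))
  simpa [kernelOp, Real.norm_eq_abs] using h

lemma kernelOp_nonneg (κ : Kernel E E) {f : E → ℝ} (hf : ∀ x, 0 ≤ f x) (x : E) :
    0 ≤ kernelOp κ f x :=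
  integral_nonneg hf

lemma kernelOp_pos (κ : Kernel E E) [IsMarkovKernel κ] {f : E → ℝ} {C : ℝ}
    (hf : Measurable f) (hC : ∀ x, |f x| ≤ C) (hpos : ∀ x, 0 < f x) (x : E) :
    0 < kernelOp κ f x := by
  rw [kernelOp, integral_pos_iff_support_of_nonneg (fun y => (hpos y).le)
    (integrable_of_bddMeas hf hC)]
  have hsupp : Function.support f = Set.univ := by
    ext y; simp [Function.support, (hpos y).ne']
  rw [hsupp]
  simp

lemma kernelOp_ofReal (κ : Kernel E E) [IsMarkovKernel κ] {f : E → ℝ} {C : ℝ}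
    (hf : Measurable f) (hC : ∀ x, |f x| ≤ C) (hpos : ∀ x, 0 ≤ f x) (x : E) :
    ENNReal.ofReal (kernelOp κ f x) = ∫⁻ y, ENNReal.ofReal (f y) ∂(κ x) :=
  ofReal_integral_eq_lintegral_ofReal (integrable_of_bddMeas hf hC)
    (Eventually.of_forall hpos)

lemma isProbabilityMeasure_bind (ν : Measure E) [IsProbabilityMeasure ν]
    (κ : Kernel E E) [IsMarkovKernel κ] : IsProbabilityMeasure (ν.bind κ) := by
  constructor
  rw [Measure.bind_apply MeasurableSet.univ κ.measurable.aemeasurable]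
  simp

/-- `∫ f d(ν.bind κ) = ∫ (Pf) dν` for bounded measurable `f`. -/
lemma integral_bind_eq (ν : Measure E) [IsProbabilityMeasure ν] (κ : Kernel E E)
    [IsMarkovKernel κ] {f : E → ℝ} {C : ℝ} (hf : Measurable f) (hC : ∀ x, |f x| ≤ C) :
    ∫ y, f y ∂(ν.bind κ) = ∫ x, kernelOp κ f x ∂ν := by
  haveI := isProbabilityMeasure_bind ν κ
  rcases isEmpty_or_nonempty E with hE | hE
  · simp [integral_of_isEmpty]
  obtain ⟨x₀⟩ := hE
  have hC0 : 0 ≤ C := le_trans (abs_nonneg _) (hC x₀)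
  set g : E → ℝ := fun y => f y + C with hg
  have hgmeas : Measurable g := hf.add_const C
  have hgpos : ∀ y, 0 ≤ g y := fun y => by have := abs_le.mp (hC y); simp [hg]; linarith
  have hgbd : ∀ y, |g y| ≤ 2 * C := fun y => by
    have := abs_le.mp (hC y); rw [abs_le]; constructor <;> simp [hg] <;> linarith
  -- lintegral computation
  have hlin : ∫⁻ y, ENNReal.ofReal (g y) ∂(ν.bind κ)
      = ∫⁻ x, ∫⁻ y, ENNReal.ofReal (g y) ∂(κ x) ∂ν :=
    Measure.lintegral_bind κ.measurable.aemeasurable hgmeas.ennreal_ofReal.aemeasurable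
  have hL : ∫⁻ y, ENNReal.ofReal (g y) ∂(ν.bind κ) = ENNReal.ofReal (∫ y, g y ∂(ν.bind κ)) :=
    (ofReal_integral_eq_lintegral_ofReal (integrable_of_bddMeas hgmeas hgbd)
      (Eventually.of_forall hgpos)).symm
  have hPg_meas : Measurable (kernelOp κ g) := kernelOp_measurable κ hgmeas
  have hPg_bd : ∀ x, |kernelOp κ g x| ≤ 2 * C := kernelOp_abs_le κ hgbd
  have hPg_nonneg : ∀ x, 0 ≤ kernelOp κ g x := kernelOp_nonneg κ hgpos
  have hR : ∫⁻ x, ∫⁻ y, ENNReal.ofReal (g y) ∂(κ x) ∂ν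
      = ENNReal.ofReal (∫ x, kernelOp κ g x ∂ν) := by
    rw [ofReal_integral_eq_lintegral_ofReal (integrable_of_bddMeas hPg_meas hPg_bd)
      (Eventually.of_forall hPg_nonneg)]
    refine lintegral_congr fun x => ?_
    exact (kernelOp_ofReal κ hgmeas hgbd hgpos x).symm
  have heq : ENNReal.ofReal (∫ y, g y ∂(ν.bind κ)) = ENNReal.ofReal (∫ x, kernelOp κ g x ∂ν) := by
    rw [← hL, hlin, hR]
  have heq' : ∫ y, g y ∂(ν.bind κ) = ∫ x, kernelOp κ g x ∂ν := by
    have h1 : 0 ≤ ∫ y, g y ∂(ν.bind κ) := integral_nonneg hgpos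
    have h2 : 0 ≤ ∫ x, kernelOp κ g x ∂ν := integral_nonneg hPg_nonneg
    exact_mod_cast (ENNReal.ofReal_eq_ofReal_iff h1 h2).mp heq
  -- unfold g
  have hg1 : ∫ y, g y ∂(ν.bind κ) = (∫ y, f y ∂(ν.bind κ)) + C := by
    rw [hg]
    rw [integral_add (integrable_of_bddMeas hf hC) (integrable_const C)]
    simp
  have hg2 : ∀ x, kernelOp κ g x = kernelOp κ f x + C := by
    intro x
    rw [kernelOp, kernelOp, hg]
    rw [integral_add (integrable_of_bddMeas hf hC) (integrable_const C)]
    simp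
  have hg3 : ∫ x, kernelOp κ g x ∂ν = (∫ x, kernelOp κ f x ∂ν) + C := by
    rw [integral_congr_ae (Eventually.of_forall hg2)]
    rw [integral_add (integrable_of_bddMeas (kernelOp_measurable κ hf) (kernelOp_abs_le κ hC))
      (integrable_const C)]
    simp
  rw [hg1, hg3] at heq'
  linarith

/-- invariance: `∫ (Pf) dμ = ∫ f dμ`. -/
lemma kernelOp_integral_inv (μ : Measure E) [IsProbabilityMeasure μ] (κ : Kernel E E)
    [IsMarkovKernel κ] (hinv : μ.bind κ = μ) {f : E → ℝ} {C : ℝ}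
    (hf : Measurable f) (hC : ∀ x, |f x| ≤ C) :
    ∫ x, kernelOp κ f x ∂μ = ∫ x, f x ∂μ := by
  conv_rhs => rw [← hinv]
  exact (integral_bind_eq μ κ hf hC).symm

/-- composition: `P_{η ∘ₖ κ'} f = P_{κ'} (P_η f)`. -/
lemma kernelOp_comp (η κ' : Kernel E E) [IsMarkovKernel η] [IsMarkovKernel κ']
    {f : E → ℝ} {C : ℝ} (hf : Measurable f) (hC : ∀ x, |f x| ≤ C) (x : E) :
    kernelOp (η ∘ₖ κ') f x = kernelOp κ' (kernelOp η f) x := by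
  rw [kernelOp, Kernel.comp_apply]
  exact integral_bind_eq (κ' x) η hf hC

/-- lintegral invariance. -/
lemma lintegral_kernel_inv (μ : Measure E) [IsProbabilityMeasure μ] (κ : Kernel E E)
    [IsMarkovKernel κ] (hinv : μ.bind κ = μ) {F : E → ℝ≥0∞} (hF : Measurable F) :
    ∫⁻ x, ∫⁻ y, F y ∂(κ x) ∂μ = ∫⁻ y, F y ∂μ := by
  conv_rhs => rw [← hinv]
  exact (Measure.lintegral_bind κ.measurable.aemeasurable hF.aemeasurable).symm

end KernelBasics

section Entropy

variable {E : Type*} [MeasurableSpace E]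

lemma mul_log_measurable {f : E → ℝ} (hf : Measurable f) :
    Measurable fun x => f x * Real.log (f x) :=
  Real.continuous_mul_log.measurable.comp hf

lemma mul_log_bdd {f : E → ℝ} {C : ℝ} (h1C : 1 ≤ C) (hpos : ∀ x, 0 < f x)
    (hC : ∀ x, f x ≤ C) : ∀ x, |f x * Real.log (f x)| ≤ C * C :=
  fun x => abs_mul_log_le (hpos x) (hC x) h1C

/-- nonnegativity of entropy for a probability density. -/
lemma entropy_nonneg (μ : Measure E) [IsProbabilityMeasure μ] {f : E → ℝ} {C : ℝ}
    (hf : Measurable f) (h1C : 1 ≤ C) (hpos : ∀ x, 0 < f x) (hC : ∀ x, f x ≤ C)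
    (hint : ∫ x, f x ∂μ = 1) : 0 ≤ ∫ x, f x * Real.log (f x) ∂μ := by
  have habs : ∀ x, |f x| ≤ C := fun x => by
    rw [abs_of_pos (hpos x)]; exact hC x
  have h1 : ∫ x, (f x - 1) ∂μ ≤ ∫ x, f x * Real.log (f x) ∂μ := by
    refine integral_mono ?_ ?_ ?_
    · exact (integrable_of_bddMeas hf habs).sub (integrable_const 1)
    · exact integrable_of_bddMeas (mul_log_measurable hf) (mul_log_bdd h1C hpos hC)
    · exact fun x => sub_one_le_mul_log (hpos x)
  have h2 : ∫ x, (f x - 1) ∂μ = 0 := by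
    rw [integral_sub (integrable_of_bddMeas hf habs) (integrable_const 1), hint]
    simp
  linarith

/-- data processing : entropy decreases under an invariant Markov kernel. -/
lemma entropy_le_of_kernel (μ : Measure E) [IsProbabilityMeasure μ] (κ : Kernel E E)
    [IsMarkovKernel κ] (hinv : μ.bind κ = μ) {f : E → ℝ} {C : ℝ}
    (hf : Measurable f) (h1C : 1 ≤ C) (hpos : ∀ x, 0 < f x) (hC : ∀ x, f x ≤ C) :
    ∫ x, kernelOp κ f x * Real.log (kernelOp κ f x) ∂μ
      ≤ ∫ x, f x * Real.log (f x) ∂μ := by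
  have habs : ∀ x, |f x| ≤ C := fun x => by rw [abs_of_pos (hpos x)]; exact hC x
  have hPf_meas : Measurable (kernelOp κ f) := kernelOp_measurable κ hf
  have hPf_pos : ∀ x, 0 < kernelOp κ f x := kernelOp_pos κ hf habs hpos
  have hPf_le : ∀ x, kernelOp κ f x ≤ C := fun x =>
    le_trans (le_abs_self _) (kernelOp_abs_le κ habs x)
  -- pointwise Jensen
  have hjen : ∀ x, kernelOp κ f x * Real.log (kernelOp κ f x)
      ≤ kernelOp κ (fun y => f y * Real.log (f y)) x := by
    intro x
    have := ConvexOn.map_integral_le (μ := κ x) (f := f)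
      Real.convexOn_mul_log Real.continuous_mul_log.continuousOn isClosed_Ici
      (Filter.Eventually.of_forall fun y => (hpos y).le)
      (integrable_of_bddMeas hf habs)
      (integrable_of_bddMeas (mul_log_measurable hf) (mul_log_bdd h1C hpos hC))
    exact this
  have h1 : ∫ x, kernelOp κ f x * Real.log (kernelOp κ f x) ∂μ
      ≤ ∫ x, kernelOp κ (fun y => f y * Real.log (f y)) x ∂μ := by
    refine integral_mono ?_ ?_ hjen
    · exact integrable_of_bddMeas (mul_log_measurable hPf_meas)
        (mul_log_bdd h1C hPf_pos hPf_le)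
    · exact integrable_of_bddMeas
        (kernelOp_measurable κ (mul_log_measurable hf))
        (kernelOp_abs_le κ (mul_log_bdd h1C hpos hC))
  rw [kernelOp_integral_inv μ κ hinv (mul_log_measurable hf) (mul_log_bdd h1C hpos hC)] at h1
  exact h1

end Entropy

section Interpolation

variable {E : Type*} [MeasurableSpace E]

/-- Elementary Stein-type interpolation for a Markov operator with invariant measure,
    between `L¹ → L¹` and hypercontractive `L^p → L^q`. -/
lemma interpolation_step (μ : Measure E) [IsProbabilityMeasure μ]
    (κ : Kernel E E) [IsMarkovKernel κ] (hinv : μ.bind κ = μ)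
    (p q : ℝ≥0∞) (hp : 1 < p) (hpq : p < q) (hq : q < ∞)
    (hHC : ∀ g : E → ℝ, BddMeasurableFn g → eLpNorm (kernelOp κ g) q μ ≤ eLpNorm g p μ)
    {f : E → ℝ} {C : ℝ} (hf : Measurable f) (h1C : 1 ≤ C)
    (hpos : ∀ x, 0 < f x) (hC : ∀ x, f x ≤ C)
    {θ : ℝ} (hθ0 : 0 < θ) (hθ1 : θ < 1) :
    ∫⁻ x, ENNReal.ofReal (kernelOp κ f x) ^ ((1 - (1 - 1/q.toReal) * θ)⁻¹) ∂μ
      ≤ (∫⁻ x, ENNReal.ofReal (f x) ^ ((1 - (1 - 1/p.toReal) * θ)⁻¹) ∂μ)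
          ^ (((1 - (1 - 1/q.toReal) * θ)⁻¹) / ((1 - (1 - 1/p.toReal) * θ)⁻¹)) := by
  -- real exponents
  set pr := p.toReal with hpr_def
  set qr := q.toReal with hqr_def
  have hp_ne_top : p ≠ ∞ := (hpq.trans hq).ne
  have hq_ne_top : q ≠ ∞ := hq.ne
  have hp_ne0 : p ≠ 0 := (zero_lt_one.trans hp).ne'
  have hq_ne0 : q ≠ 0 := (zero_lt_one.trans (hp.trans hpq)).ne'
  have hpr1 : 1 < pr := by
    rw [hpr_def, ← ENNReal.toReal_one]
    exact ENNReal.toReal_strict_mono hp_ne_top hp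
  have hqr1 : 1 < qr := by
    rw [hqr_def, ← ENNReal.toReal_one]
    exact ENNReal.toReal_strict_mono hq_ne_top (hp.trans hpq)
  have hprqr : pr < qr := ENNReal.toReal_strict_mono hq_ne_top hpq
  have hpr0 : 0 < pr := by linarith
  have hqr0 : 0 < qr := by linarith
  set ap := 1 - 1/pr with hap_def
  set aq := 1 - 1/qr with haq_def
  have hinvpr : 0 < 1/pr := by positivity
  have hinvpr1 : 1/pr < 1 := by rw [div_lt_one hpr0]; exact hpr1
  have hinvqr : 0 < 1/qr := by positivity
  have hinvqr1 : 1/qr < 1 := by rw [div_lt_one hqr0]; exact hqr1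
  have hap0 : 0 < ap := by rw [hap_def]; linarith
  have hap1 : ap < 1 := by rw [hap_def]; linarith
  have haq0 : 0 < aq := by rw [haq_def]; linarith
  have haq1 : aq < 1 := by rw [haq_def]; linarith
  have hdp : 0 < 1 - ap * θ := by nlinarith
  have hdq : 0 < 1 - aq * θ := by nlinarith
  set pθ := (1 - ap * θ)⁻¹ with hpθ_def
  set qθ := (1 - aq * θ)⁻¹ with hqθ_def
  have hpθ0 : 0 < pθ := by rw [hpθ_def]; positivity
  have hqθ0 : 0 < qθ := by rw [hqθ_def]; positivity
  have hpθ1 : 1 < pθ := by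
    have h : 1 - ap * θ < 1 := by nlinarith
    have h2 := one_div_lt_one_div_of_lt hdp h
    rw [hpθ_def]
    rw [div_self (by norm_num : (1:ℝ) ≠ 0), one_div] at h2
    exact h2
  have hqθ1 : 1 < qθ := by
    have h : 1 - aq * θ < 1 := by nlinarith
    have h2 := one_div_lt_one_div_of_lt hdq h
    rw [hqθ_def]
    rw [div_self (by norm_num : (1:ℝ) ≠ 0), one_div] at h2
    exact h2
  have hθ1' : 0 < 1 - θ := by linarith
  have hpθpr : pθ < pr := by
    have h3 : 1/pr < 1 - ap * θ := by rw [hap_def]; nlinarith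
    have h4 := one_div_lt_one_div_of_lt hinvpr h3
    rw [one_div_one_div, one_div] at h4
    rw [hpθ_def]; exact h4
  set v := pθ / pr with hv_def
  have hv0 : 0 < v := by rw [hv_def]; positivity
  have hv1 : v < 1 := by rw [hv_def, div_lt_one hpr0]; exact hpθpr
  have hdp_ne : (1 - ap * θ) ≠ 0 := hdp.ne'
  have hdq_ne : (1 - aq * θ) ≠ 0 := hdq.ne'
  have hpr_ne : pr ≠ 0 := hpr0.ne'
  have hqr_ne : qr ≠ 0 := hqr0.ne'
  -- key scalar identities
  have id1 : (1 - θ) * pθ + θ * v = 1 := by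
    have h' : (1 - θ) * pθ + θ * v = pθ * (1 - ap * θ) := by
      rw [hv_def, hap_def]; ring
    rw [h', hpθ_def, inv_mul_cancel₀ hdp_ne]
  have id4 : (1 - θ) * qθ + θ * qθ / qr = 1 := by
    have h' : (1 - θ) * qθ + θ * qθ / qr = qθ * (1 - aq * θ) := by
      rw [haq_def]; ring
    rw [h', hqθ_def, inv_mul_cancel₀ hdq_ne]
  have id5 : v * pr = pθ := by rw [hv_def]; field_simp
  have id6 : (1 - θ) * qθ + qr / pr * (θ * qθ / qr) = qθ / pθ := by
    have hqq : qr / pr * (θ * qθ / qr) = qθ * (θ / pr) := by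
      field_simp
    calc (1 - θ) * qθ + qr / pr * (θ * qθ / qr)
        = qθ * (1 - ap * θ) := by rw [hqq, hap_def]; ring
      _ = qθ / pθ := by
          rw [hpθ_def, div_eq_mul_inv, inv_inv]
  -- ENNReal-valued density
  set F : E → ℝ≥0∞ := fun y => ENNReal.ofReal (f y) with hF_def
  have hF_meas : Measurable F := hf.ennreal_ofReal
  have hF_pos : ∀ y, F y ≠ 0 := fun y => (ENNReal.ofReal_pos.mpr (hpos y)).ne'
  have hF_ne_top : ∀ y, F y ≠ ∞ := fun y => ENNReal.ofReal_ne_top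
  have habs : ∀ x, |f x| ≤ C := fun x => by rw [abs_of_pos (hpos x)]; exact hC x
  -- Step 1 : pointwise Hölder over the kernel measure
  have conj1 : Real.HolderConjugate (1/(1-θ)) (1/θ) := by
    rw [Real.holderConjugate_iff]; constructor
    · rw [lt_div_iff₀ hθ1']; linarith
    · rw [one_div, one_div, inv_inv, inv_inv]; ring
  have step1 : ∀ x, ENNReal.ofReal (kernelOp κ f x)
      ≤ (∫⁻ y, F y ^ pθ ∂κ x) ^ (1 - θ) * (∫⁻ y, F y ^ v ∂κ x) ^ θ := by
    intro x
    rw [kernelOp_ofReal κ hf habs (fun y => (hpos y).le) x]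
    have hsplit : ∀ y, F y = (F y ^ ((1-θ) * pθ)) * (F y ^ (θ * v)) := by
      intro y
      rw [← ENNReal.rpow_add _ _ (hF_pos y) (hF_ne_top y), id1, ENNReal.rpow_one]
    calc ∫⁻ y, F y ∂κ x
        = ∫⁻ y, ((fun z => F z ^ ((1-θ) * pθ)) * fun z => F z ^ (θ * v)) y ∂κ x := by
          refine lintegral_congr fun y => ?_
          simpa using hsplit y
      _ ≤ (∫⁻ y, (F y ^ ((1-θ) * pθ)) ^ (1/(1-θ)) ∂κ x) ^ (1/(1/(1-θ)))
            * (∫⁻ y, (F y ^ (θ * v)) ^ (1/θ) ∂κ x) ^ (1/(1/θ)) :=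
          ENNReal.lintegral_mul_le_Lp_mul_Lq (κ x) conj1
            (hF_meas.pow_const _).aemeasurable (hF_meas.pow_const _).aemeasurable
      _ = (∫⁻ y, F y ^ pθ ∂κ x) ^ (1-θ) * (∫⁻ y, F y ^ v ∂κ x) ^ θ := by
          rw [one_div_one_div, one_div_one_div]
          congr 1
          · congr 1
            refine lintegral_congr fun y => ?_
            rw [← ENNReal.rpow_mul]
            congr 1
            field_simp
          · congr 1
            refine lintegral_congr fun y => ?_
            rw [← ENNReal.rpow_mul]
            congr 1
            field_simp
  -- raise to power qθ
  have step2 : ∀ x, ENNReal.ofReal (kernelOp κ f x) ^ qθ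
      ≤ (∫⁻ y, F y ^ pθ ∂κ x) ^ ((1-θ) * qθ) * (∫⁻ y, F y ^ v ∂κ x) ^ (θ * qθ) := by
    intro x
    calc ENNReal.ofReal (kernelOp κ f x) ^ qθ
        ≤ ((∫⁻ y, F y ^ pθ ∂κ x) ^ (1-θ) * (∫⁻ y, F y ^ v ∂κ x) ^ θ) ^ qθ :=
          ENNReal.rpow_le_rpow (step1 x) hqθ0.le
      _ = (∫⁻ y, F y ^ pθ ∂κ x) ^ ((1-θ) * qθ) * (∫⁻ y, F y ^ v ∂κ x) ^ (θ * qθ) := by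
          rw [ENNReal.mul_rpow_of_nonneg _ _ hqθ0.le, ← ENNReal.rpow_mul, ← ENNReal.rpow_mul]
  -- measurable kernel integrals
  have hA_meas : Measurable fun x => ∫⁻ y, F y ^ pθ ∂κ x := by
    refine Measurable.lintegral_kernel_prod_right ?_
    exact (hF_meas.pow_const pθ).comp measurable_snd
  have hB_meas : Measurable fun x => ∫⁻ y, F y ^ v ∂κ x := by
    refine Measurable.lintegral_kernel_prod_right ?_
    exact (hF_meas.pow_const v).comp measurable_snd
  -- Hölder over μ
  have hq2pos : 0 < (1-θ) * qθ := by positivity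
  have hq3pos : 0 < θ * qθ := by positivity
  have hlt1 : (1-θ) * qθ < 1 := by
    rw [hqθ_def, mul_inv_lt_iff₀ hdq]
    nlinarith
  have conj2 : Real.HolderConjugate (1/((1-θ)*qθ)) (qr/(θ*qθ)) := by
    rw [Real.holderConjugate_iff]; constructor
    · rw [lt_div_iff₀ hq2pos]; linarith
    · rw [one_div, inv_inv, inv_div]
      exact id4
  have step3 : ∫⁻ x, ENNReal.ofReal (kernelOp κ f x) ^ qθ ∂μ
      ≤ (∫⁻ x, ∫⁻ y, F y ^ pθ ∂κ x ∂μ) ^ ((1-θ) * qθ)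
        * (∫⁻ x, (∫⁻ y, F y ^ v ∂κ x) ^ qr ∂μ) ^ (θ * qθ / qr) := by
    calc ∫⁻ x, ENNReal.ofReal (kernelOp κ f x) ^ qθ ∂μ
        ≤ ∫⁻ x, ((fun z => (∫⁻ y, F y ^ pθ ∂κ z) ^ ((1-θ) * qθ))
            * fun z => (∫⁻ y, F y ^ v ∂κ z) ^ (θ * qθ)) x ∂μ := by
          refine lintegral_mono fun x => ?_
          simpa using step2 x
      _ ≤ (∫⁻ x, ((∫⁻ y, F y ^ pθ ∂κ x) ^ ((1-θ) * qθ)) ^ (1/((1-θ)*qθ)) ∂μ) ^ (1/(1/((1-θ)*qθ)))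
          * (∫⁻ x, ((∫⁻ y, F y ^ v ∂κ x) ^ (θ * qθ)) ^ (qr/(θ*qθ)) ∂μ) ^ (1/(qr/(θ*qθ))) :=
          ENNReal.lintegral_mul_le_Lp_mul_Lq μ conj2
            ((hA_meas.pow_const _)).aemeasurable ((hB_meas.pow_const _)).aemeasurable
      _ = (∫⁻ x, ∫⁻ y, F y ^ pθ ∂κ x ∂μ) ^ ((1-θ) * qθ)
          * (∫⁻ x, (∫⁻ y, F y ^ v ∂κ x) ^ qr ∂μ) ^ (θ * qθ / qr) := by
          rw [one_div_one_div, one_div_div]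
          congr 1
          · congr 1
            refine lintegral_congr fun x => ?_
            rw [← ENNReal.rpow_mul,
              show ((1-θ) * qθ) * (1/((1-θ)*qθ)) = 1 by field_simp, ENNReal.rpow_one]
          · congr 1
            refine lintegral_congr fun x => ?_
            rw [← ENNReal.rpow_mul]
            congr 1
            field_simp
  -- identify the two factors
  set X := ∫⁻ y, F y ^ pθ ∂μ with hX_def
  have fact1 : ∫⁻ x, ∫⁻ y, F y ^ pθ ∂κ x ∂μ = X :=
    lintegral_kernel_inv μ κ hinv (hF_meas.pow_const pθ)
  -- the hypercontractive factor
  set g : E → ℝ := fun y => f y ^ v with hg_def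
  have hg_meas : Measurable g := (Real.continuous_rpow_const hv0.le).measurable.comp hf
  have hg_pos : ∀ y, 0 < g y := fun y => Real.rpow_pos_of_pos (hpos y) v
  have hg_le : ∀ y, g y ≤ C := by
    intro y
    calc f y ^ v ≤ C ^ v := Real.rpow_le_rpow (hpos y).le (hC y) hv0.le
      _ ≤ C ^ (1:ℝ) := Real.rpow_le_rpow_of_exponent_le h1C hv1.le
      _ = C := Real.rpow_one C
  have hg_abs : ∀ y, |g y| ≤ C := fun y => by rw [abs_of_pos (hg_pos y)]; exact hg_le y
  have hgF : ∀ y, F y ^ v = ENNReal.ofReal (g y) := fun y =>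
    ENNReal.ofReal_rpow_of_pos (hpos y)
  have hPg_meas : Measurable (kernelOp κ g) := kernelOp_measurable κ hg_meas
  have hPg_nonneg : ∀ x, 0 ≤ kernelOp κ g x := kernelOp_nonneg κ fun y => (hg_pos y).le
  have hBPg : ∀ x, (∫⁻ y, F y ^ v ∂κ x) = ENNReal.ofReal (kernelOp κ g x) := by
    intro x
    rw [kernelOp_ofReal κ hg_meas hg_abs (fun y => (hg_pos y).le) x]
    exact lintegral_congr fun y => hgF y
  have e1 : (eLpNorm (kernelOp κ g) q μ) ^ qr
      = ∫⁻ x, ENNReal.ofReal (kernelOp κ g x) ^ qr ∂μ := by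
    rw [eLpNorm_eq_lintegral_rpow_enorm_toReal hq_ne0 hq_ne_top, ← ENNReal.rpow_mul,
      show 1/qr * qr = 1 by field_simp, ENNReal.rpow_one]
    refine lintegral_congr fun x => ?_
    rw [Real.enorm_eq_ofReal (hPg_nonneg x)]
  have e2 : eLpNorm g p μ = X ^ (1/pr : ℝ) := by
    rw [eLpNorm_eq_lintegral_rpow_enorm_toReal hp_ne0 hp_ne_top, hX_def]
    rw [one_div]
    congr 1
    refine lintegral_congr fun y => ?_
    rw [Real.enorm_eq_ofReal (hg_pos y).le, ← hgF y, ← ENNReal.rpow_mul, id5]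
  have fact2 : ∫⁻ x, (∫⁻ y, F y ^ v ∂κ x) ^ qr ∂μ ≤ X ^ (qr / pr) := by
    have hHCg := hHC g ⟨hg_meas, C, hg_abs⟩
    calc ∫⁻ x, (∫⁻ y, F y ^ v ∂κ x) ^ qr ∂μ
        = ∫⁻ x, ENNReal.ofReal (kernelOp κ g x) ^ qr ∂μ := by
          exact lintegral_congr fun x => by rw [hBPg x]
      _ = (eLpNorm (kernelOp κ g) q μ) ^ qr := e1.symm
      _ ≤ (eLpNorm g p μ) ^ qr := ENNReal.rpow_le_rpow hHCg hqr0.le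
      _ = X ^ (qr / pr) := by
          rw [e2, ← ENNReal.rpow_mul]
          congr 1
          rw [one_div]
          field_simp
  -- X is neither 0 nor ∞
  have hXtop : X ≠ ∞ := by
    have hbd : ∀ y, F y ^ pθ ≤ ENNReal.ofReal C ^ pθ := fun y =>
      ENNReal.rpow_le_rpow (ENNReal.ofReal_le_ofReal (hC y)) hpθ0.le
    have hle : X ≤ ENNReal.ofReal C ^ pθ := by
      calc X ≤ ∫⁻ _, ENNReal.ofReal C ^ pθ ∂μ := lintegral_mono hbd
        _ = ENNReal.ofReal C ^ pθ := by simp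
    exact ne_top_of_le_ne_top
      (ENNReal.rpow_ne_top_of_nonneg hpθ0.le ENNReal.ofReal_ne_top) hle
  have hX0 : X ≠ 0 := by
    intro h0
    rw [hX_def, lintegral_eq_zero_iff (hF_meas.pow_const pθ)] at h0
    have hfalse : ∀ᵐ y ∂μ, False := by
      filter_upwards [h0] with y hy
      have hpow : F y ^ pθ ≠ 0 :=
        (ENNReal.rpow_pos (bot_lt_iff_ne_bot.mpr (hF_pos y)) (hF_ne_top y)).ne'
      exact hpow hy
    have h1 := ae_iff.mp hfalse
    simp [measure_univ] at h1
  -- combine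
  calc ∫⁻ x, ENNReal.ofReal (kernelOp κ f x) ^ qθ ∂μ
      ≤ (∫⁻ x, ∫⁻ y, F y ^ pθ ∂κ x ∂μ) ^ ((1-θ) * qθ)
        * (∫⁻ x, (∫⁻ y, F y ^ v ∂κ x) ^ qr ∂μ) ^ (θ * qθ / qr) := step3
    _ ≤ X ^ ((1-θ) * qθ) * (X ^ (qr/pr)) ^ (θ * qθ / qr) := by
        rw [fact1]
        exact mul_le_mul' le_rfl (ENNReal.rpow_le_rpow fact2 (by positivity))
    _ = X ^ (qθ / pθ) := by
        rw [← ENNReal.rpow_mul, ← ENNReal.rpow_add _ _ hX0 hXtop, id6]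

end Interpolation

section Contraction

variable {E : Type*} [MeasurableSpace E]

lemma entropy_contraction (μ : Measure E) [IsProbabilityMeasure μ]
    (κ : Kernel E E) [IsMarkovKernel κ] (hinv : μ.bind κ = μ)
    (pr qr : ℝ) (hpr1 : 1 < pr) (hprqr : pr < qr)
    {f : E → ℝ} {C : ℝ} (hf : Measurable f) (h1C : 1 ≤ C)
    (hpos : ∀ x, 0 < f x) (hC : ∀ x, f x ≤ C) (hint : ∫ x, f x ∂μ = 1)
    (hINT : ∀ θ : ℝ, 0 < θ → θ < 1 →
      ∫⁻ x, ENNReal.ofReal (kernelOp κ f x) ^ ((1 - (1 - 1/qr) * θ)⁻¹) ∂μ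
        ≤ (∫⁻ x, ENNReal.ofReal (f x) ^ ((1 - (1 - 1/pr) * θ)⁻¹) ∂μ)
            ^ (((1 - (1 - 1/qr) * θ)⁻¹) / ((1 - (1 - 1/pr) * θ)⁻¹))) :
    ∫ x, kernelOp κ f x * Real.log (kernelOp κ f x) ∂μ
      ≤ ((1 - 1/pr)/(1 - 1/qr)) * ∫ x, f x * Real.log (f x) ∂μ := by
  have hpr0 : 0 < pr := lt_trans one_pos hpr1
  have hqr1 : 1 < qr := hpr1.trans hprqr
  have hqr0 : 0 < qr := lt_trans one_pos hqr1
  have hinvpr1 : 1/pr < 1 := by rw [div_lt_one hpr0]; exact hpr1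
  have hinvqr1 : 1/qr < 1 := by rw [div_lt_one hqr0]; exact hqr1
  have hinvpr0 : 0 < 1/pr := by positivity
  have hinvqr0 : 0 < 1/qr := by positivity
  set ap := 1 - 1/pr with hap_def
  set aq := 1 - 1/qr with haq_def
  have hap0 : 0 < ap := by rw [hap_def]; linarith
  have hap1 : ap < 1 := by rw [hap_def]; linarith
  have haq0 : 0 < aq := by rw [haq_def]; linarith
  have haq1 : aq < 1 := by rw [haq_def]; linarith
  -- the sequence of parameters
  set θf : ℕ → ℝ := fun n => (1/2) * (1/((n:ℝ)+1)) with hθf_def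
  have hθpos : ∀ n, 0 < θf n := by
    intro n; rw [hθf_def]; positivity
  have hθhalf : ∀ n, θf n ≤ 1/2 := by
    intro n; rw [hθf_def]
    have h1 : 1/((n:ℝ)+1) ≤ 1 := by
      rw [div_le_one (by positivity)]
      simp
    nlinarith
  have hθ1 : ∀ n, θf n < 1 := fun n => lt_of_le_of_lt (hθhalf n) (by norm_num)
  have hθ0 : Filter.Tendsto θf atTop (𝓝 0) := by
    have h1 := tendsto_one_div_add_atTop_nhds_zero_nat (𝕜 := ℝ)
    have h2 := h1.const_mul (1/2 : ℝ)
    rw [hθf_def]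
    simpa using h2
  -- facts about the exponents
  have hdp : ∀ n, 0 < 1 - ap * θf n := by
    intro n; have := hθpos n; have := hθ1 n; nlinarith
  have hdq : ∀ n, 0 < 1 - aq * θf n := by
    intro n; have := hθpos n; have := hθ1 n; nlinarith
  have hpn1 : ∀ n, 1 < (1 - ap * θf n)⁻¹ := by
    intro n
    have h : 1 - ap * θf n < 1 := by have := hθpos n; nlinarith
    have h2 := one_div_lt_one_div_of_lt (hdp n) h
    rw [div_self (by norm_num : (1:ℝ) ≠ 0), one_div] at h2
    exact h2
  have hqn1 : ∀ n, 1 < (1 - aq * θf n)⁻¹ := by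
    intro n
    have h : 1 - aq * θf n < 1 := by have := hθpos n; nlinarith
    have h2 := one_div_lt_one_div_of_lt (hdq n) h
    rw [div_self (by norm_num : (1:ℝ) ≠ 0), one_div] at h2
    exact h2
  have hpn2 : ∀ n, (1 - ap * θf n)⁻¹ ≤ 2 := by
    intro n
    have h : (1:ℝ)/2 ≤ 1 - ap * θf n := by
      have h1 := hθpos n; have h2 := hθhalf n; nlinarith
    have h3 := one_div_le_one_div_of_le (by norm_num : (0:ℝ) < 1/2) h
    rw [one_div_one_div] at h3
    rw [← one_div]
    exact h3
  have hqn2 : ∀ n, (1 - aq * θf n)⁻¹ ≤ 2 := by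
    intro n
    have h : (1:ℝ)/2 ≤ 1 - aq * θf n := by
      have h1 := hθpos n; have h2 := hθhalf n; nlinarith
    have h3 := one_div_le_one_div_of_le (by norm_num : (0:ℝ) < 1/2) h
    rw [one_div_one_div] at h3
    rw [← one_div]
    exact h3
  -- the operator image
  have habs : ∀ x, |f x| ≤ C := fun x => by rw [abs_of_pos (hpos x)]; exact hC x
  set Pf := kernelOp κ f with hPf_def
  have hPf_meas : Measurable Pf := kernelOp_measurable κ hf
  have hPf_pos : ∀ x, 0 < Pf x := kernelOp_pos κ hf habs hpos
  have hPf_le : ∀ x, Pf x ≤ C := fun x =>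
    le_trans (le_abs_self _) (kernelOp_abs_le κ habs x)
  have hPfint : ∫ x, Pf x ∂μ = 1 := by
    rw [hPf_def, kernelOp_integral_inv μ κ hinv hf habs, hint]
  set Eh := ∫ x, Pf x * Real.log (Pf x) ∂μ with hEh_def
  set Ef := ∫ x, f x * Real.log (f x) ∂μ with hEf_def
  -- conversion : lintegral of ofReal rpow = ofReal of real integral
  have conv : ∀ (g : E → ℝ), Measurable g → (∀ x, 0 < g x) → (∀ x, g x ≤ C) →
      ∀ r : ℝ, 0 ≤ r → r ≤ 2 →
      ∫⁻ x, ENNReal.ofReal (g x) ^ r ∂μ = ENNReal.ofReal (∫ x, g x ^ r ∂μ) := by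
    intro g hg hgpos hgle r hr0 hr2
    have hmeas : Measurable fun x => g x ^ r :=
      (Real.continuous_rpow_const hr0).measurable.comp hg
    have hbd : ∀ x, |g x ^ r| ≤ C * C := by
      intro x
      rw [abs_of_nonneg (Real.rpow_nonneg (hgpos x).le r)]
      calc g x ^ r ≤ C ^ r := Real.rpow_le_rpow (hgpos x).le (hgle x) hr0
        _ ≤ C ^ (2:ℝ) := Real.rpow_le_rpow_of_exponent_le h1C hr2
        _ = C * C := by
            rw [show (2:ℝ) = ((2:ℕ):ℝ) by norm_num, Real.rpow_natCast]; ring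
    calc ∫⁻ x, ENNReal.ofReal (g x) ^ r ∂μ
        = ∫⁻ x, ENNReal.ofReal (g x ^ r) ∂μ :=
          lintegral_congr fun x => ENNReal.ofReal_rpow_of_pos (hgpos x)
      _ = ENNReal.ofReal (∫ x, g x ^ r ∂μ) :=
          (ofReal_integral_eq_lintegral_ofReal (integrable_of_bddMeas hmeas hbd)
            (Filter.Eventually.of_forall fun x => Real.rpow_nonneg (hgpos x).le r)).symm
  -- integrability facts
  have int_rpow : ∀ (g : E → ℝ), Measurable g → (∀ x, 0 < g x) → (∀ x, g x ≤ C) →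
      ∀ r : ℝ, 0 ≤ r → r ≤ 2 → Integrable (fun x => g x ^ r) μ := by
    intro g hg hgpos hgle r hr0 hr2
    refine integrable_of_bddMeas (C := C * C) ((Real.continuous_rpow_const hr0).measurable.comp hg) ?_
    intro x
    rw [abs_of_nonneg (Real.rpow_nonneg (hgpos x).le r)]
    calc g x ^ r ≤ C ^ r := Real.rpow_le_rpow (hgpos x).le (hgle x) hr0
      _ ≤ C ^ (2:ℝ) := Real.rpow_le_rpow_of_exponent_le h1C hr2
      _ = C * C := by
          rw [show (2:ℝ) = ((2:ℕ):ℝ) by norm_num, Real.rpow_natCast]; ring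
  -- the real-variable interpolation inequality
  have hIp_nonneg : ∀ n, 0 ≤ ∫ x, f x ^ ((1 - ap * θf n)⁻¹) ∂μ := by
    intro n
    exact integral_nonneg fun x => Real.rpow_nonneg (hpos x).le _
  have hreal : ∀ n, ∫ x, Pf x ^ ((1 - aq * θf n)⁻¹) ∂μ
      ≤ (∫ x, f x ^ ((1 - ap * θf n)⁻¹) ∂μ) ^ ((1 - aq * θf n)⁻¹ / (1 - ap * θf n)⁻¹) := by
    intro n
    have h := hINT (θf n) (hθpos n) (hθ1 n)
    rw [conv Pf hPf_meas hPf_pos hPf_le _ (by linarith [hqn1 n]) (hqn2 n),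
      conv f hf hpos hC _ (by linarith [hpn1 n]) (hpn2 n)] at h
    rw [ENNReal.ofReal_rpow_of_nonneg (hIp_nonneg n)
      (le_of_lt (div_pos (inv_pos.mpr (hdq n)) (inv_pos.mpr (hdp n))))] at h
    exact (ENNReal.ofReal_le_ofReal_iff
      (Real.rpow_nonneg (hIp_nonneg n) _)).mp h
  -- lower bound for the left side
  have hlow : ∀ n, 1 + ((1 - aq * θf n)⁻¹ - 1) * Eh
      ≤ ∫ x, Pf x ^ ((1 - aq * θf n)⁻¹) ∂μ := by
    intro n
    have hpt : ∀ x, Pf x + ((1 - aq * θf n)⁻¹ - 1) * (Pf x * Real.log (Pf x))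
        ≤ Pf x ^ ((1 - aq * θf n)⁻¹) := fun x => rpow_ge_add_mul_log (hPf_pos x) _
    have hint1 : Integrable (fun x =>
        Pf x + ((1 - aq * θf n)⁻¹ - 1) * (Pf x * Real.log (Pf x))) μ := by
      refine (integrable_of_bddMeas hPf_meas (fun x => by
        rw [abs_of_pos (hPf_pos x)]; exact hPf_le x)).add ?_
      exact (integrable_of_bddMeas (mul_log_measurable hPf_meas)
        (mul_log_bdd h1C hPf_pos hPf_le)).const_mul _
    have h2 := integral_mono hint1
      (int_rpow Pf hPf_meas hPf_pos hPf_le _ (by linarith [hqn1 n]) (hqn2 n)) hpt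
    rw [integral_add (integrable_of_bddMeas hPf_meas (fun x => by
        rw [abs_of_pos (hPf_pos x)]; exact hPf_le x))
      ((integrable_of_bddMeas (mul_log_measurable hPf_meas)
        (mul_log_bdd h1C hPf_pos hPf_le)).const_mul _),
      MeasureTheory.integral_const_mul, hPfint] at h2
    exact h2
  -- upper bound for the right side
  have hIp_pos : ∀ n, 0 < ∫ x, f x ^ ((1 - ap * θf n)⁻¹) ∂μ := by
    intro n
    rw [integral_pos_iff_support_of_nonneg
      (fun x => Real.rpow_nonneg (hpos x).le _)
      (int_rpow f hf hpos hC _ (by linarith [hpn1 n]) (hpn2 n))]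
    have hsup : (Function.support fun x => f x ^ (1 - ap * θf n)⁻¹) = Set.univ := by
      ext x
      simp [Function.support, (Real.rpow_pos_of_pos (hpos x) _).ne']
    rw [hsup]
    simp
  have hup : ∀ n, (∫ x, f x ^ ((1 - ap * θf n)⁻¹) ∂μ) ^ ((1 - aq * θf n)⁻¹ / (1 - ap * θf n)⁻¹)
      ≤ Real.exp (((1 - aq * θf n)⁻¹ / (1 - ap * θf n)⁻¹)
          * ((∫ x, f x ^ ((1 - ap * θf n)⁻¹) ∂μ) - 1)) := by
    intro n
    rw [Real.rpow_def_of_pos (hIp_pos n)]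
    apply Real.exp_le_exp.mpr
    rw [mul_comm]
    exact mul_le_mul_of_nonneg_left (Real.log_le_sub_one_of_pos (hIp_pos n))
      (le_of_lt (div_pos (inv_pos.mpr (hdq n)) (inv_pos.mpr (hdp n))))
  -- the main inequality, divided by θ
  have hmain : ∀ n, (((1 - aq * θf n)⁻¹ - 1)/θf n) * Eh
      ≤ (Real.exp (((1 - aq * θf n)⁻¹ / (1 - ap * θf n)⁻¹)
          * ((∫ x, f x ^ ((1 - ap * θf n)⁻¹) ∂μ) - 1)) - 1)/θf n := by
    intro n
    have h1 := le_trans (hlow n) (le_trans (hreal n) (hup n))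
    have h2 : ((1 - aq * θf n)⁻¹ - 1) * Eh
        ≤ Real.exp (((1 - aq * θf n)⁻¹ / (1 - ap * θf n)⁻¹)
          * ((∫ x, f x ^ ((1 - ap * θf n)⁻¹) ∂μ) - 1)) - 1 := by linarith
    have h3 := (div_le_div_iff_of_pos_right (hθpos n)).mpr h2
    calc (((1 - aq * θf n)⁻¹ - 1)/θf n) * Eh
        = (((1 - aq * θf n)⁻¹ - 1) * Eh)/θf n := by ring
      _ ≤ _ := h3
  -- auxiliary limits
  have hInvT : ∀ a : ℝ, 0 < a → a < 1 →
      Filter.Tendsto (fun n => (1 - a * θf n)⁻¹) atTop (𝓝 1) := by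
    intro a ha0 ha1
    have hbase : Filter.Tendsto (fun n => 1 - a * θf n) atTop (𝓝 (1 - a * 0)) :=
      tendsto_const_nhds.sub (hθ0.const_mul a)
    rw [mul_zero, sub_zero] at hbase
    have h2 := hbase.inv₀ (by norm_num : (1:ℝ) ≠ 0)
    simpa using h2
  have Tgen : ∀ a : ℝ, 0 < a → a < 1 →
      Filter.Tendsto (fun n => ((1 - a * θf n)⁻¹ - 1)/θf n) atTop (𝓝 a) := by
    intro a ha0 ha1
    have hda : ∀ n, 0 < 1 - a * θf n := by
      intro n; have := hθpos n; have := hθ1 n; nlinarith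
    have heq : ∀ n, ((1 - a * θf n)⁻¹ - 1)/θf n = a * (1 - a * θf n)⁻¹ := by
      intro n
      have h1 : (1 - a * θf n) ≠ 0 := (hda n).ne'
      have h2 : θf n ≠ 0 := (hθpos n).ne'
      field_simp
      ring
    have h3 := (hInvT a ha0 ha1).const_mul a
    rw [mul_one] at h3
    exact h3.congr fun n => (heq n).symm
  have hsn_pos : ∀ n, 0 < (1 - ap * θf n)⁻¹ - 1 := fun n => sub_pos.mpr (hpn1 n)
  -- dominated convergence
  have T1 : Filter.Tendsto
      (fun n => ((∫ x, f x ^ ((1 - ap * θf n)⁻¹) ∂μ) - 1)/((1 - ap * θf n)⁻¹ - 1))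
      atTop (𝓝 Ef) := by
    have hDCT := tendsto_integral_of_dominated_convergence (μ := μ)
      (F := fun n x => (f x ^ ((1 - ap * θf n)⁻¹) - f x)/((1 - ap * θf n)⁻¹ - 1))
      (f := fun x => f x * Real.log (f x))
      (bound := fun _ => 1 + C * C * C)
      (fun n => ((((Real.continuous_rpow_const (by linarith [hpn1 n])).measurable.comp
        hf).sub hf).div_const _).aestronglyMeasurable)
      (integrable_const _)
      (by
        intro n
        refine Filter.Eventually.of_forall fun x => ?_
        rw [Real.norm_eq_abs, abs_div, abs_of_pos (hsn_pos n)]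
        rw [div_le_iff₀ (hsn_pos n)]
        calc |f x ^ ((1 - ap * θf n)⁻¹) - f x|
            ≤ ((1 - ap * θf n)⁻¹ - 1) * (1 + C * C * C) :=
              abs_rpow_sub_le (hpos x) (hC x) h1C (hpn1 n) (hpn2 n)
          _ = (1 + C * C * C) * ((1 - ap * θf n)⁻¹ - 1) := by ring)
      (by
        refine Filter.Eventually.of_forall fun x => ?_
        have hs : Filter.Tendsto (fun n => (1 - ap * θf n)⁻¹ - 1) atTop (𝓝 0) := by
          have := (hInvT ap hap0 hap1).sub_const 1
          simpa using this
        have := tendsto_rpow_slope (hpos x) hs (fun n => (hsn_pos n).ne')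
        refine this.congr fun n => ?_
        rw [show 1 + ((1 - ap * θf n)⁻¹ - 1) = (1 - ap * θf n)⁻¹ by ring])
    refine hDCT.congr fun n => ?_
    rw [integral_div, integral_sub
      (int_rpow f hf hpos hC _ (by linarith [hpn1 n]) (hpn2 n))
      (integrable_of_bddMeas hf habs), hint]
  have T3 : Filter.Tendsto
      (fun n => ((∫ x, f x ^ ((1 - ap * θf n)⁻¹) ∂μ) - 1)/θf n)
      atTop (𝓝 (ap * Ef)) := by
    have h := T1.mul (Tgen ap hap0 hap1)
    rw [mul_comm] at h
    refine h.congr fun n => ?_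
    rw [div_mul_div_comm, mul_comm ((∫ x, f x ^ ((1 - ap * θf n)⁻¹) ∂μ) - 1)
      ((1 - ap * θf n)⁻¹ - 1), mul_comm ((1 - ap * θf n)⁻¹ - 1) (θf n),
      mul_comm ((1 - ap * θf n)⁻¹ - 1)]
    rw [mul_div_mul_right _ _ (hsn_pos n).ne']
  -- behaviour of the ratio of exponents
  have T4 : Filter.Tendsto (fun n => (1 - aq * θf n)⁻¹ / (1 - ap * θf n)⁻¹)
      atTop (𝓝 1) := by
    have h := (hInvT aq haq0 haq1).div (hInvT ap hap0 hap1) (by norm_num : (1:ℝ) ≠ 0)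
    rw [div_one] at h
    exact h.congr fun n => rfl
  have hD : Filter.Tendsto (fun n => (∫ x, f x ^ ((1 - ap * θf n)⁻¹) ∂μ) - 1)
      atTop (𝓝 0) := by
    have h := hθ0.mul T3
    rw [zero_mul] at h
    refine h.congr fun n => ?_
    rw [mul_comm, div_mul_cancel₀ _ (hθpos n).ne']
  have Tu : Filter.Tendsto (fun n => ((1 - aq * θf n)⁻¹ / (1 - ap * θf n)⁻¹)
      * ((∫ x, f x ^ ((1 - ap * θf n)⁻¹) ∂μ) - 1)) atTop (𝓝 0) := by
    have h := T4.mul hD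
    rw [mul_zero] at h
    exact h
  have Tu2 : Filter.Tendsto (fun n => (((1 - aq * θf n)⁻¹ / (1 - ap * θf n)⁻¹)
      * ((∫ x, f x ^ ((1 - ap * θf n)⁻¹) ∂μ) - 1))/θf n) atTop (𝓝 (ap * Ef)) := by
    have h := T4.mul T3
    rw [one_mul] at h
    exact h.congr fun n => (mul_div_assoc _ _ _).symm
  have hev : ∀ᶠ n in atTop, |((1 - aq * θf n)⁻¹ / (1 - ap * θf n)⁻¹)
      * ((∫ x, f x ^ ((1 - ap * θf n)⁻¹) ∂μ) - 1)| ≤ 1 := by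
    obtain ⟨N, hN⟩ := Metric.tendsto_atTop.mp Tu 1 one_pos
    refine Filter.eventually_atTop.mpr ⟨N, fun n hn => ?_⟩
    have := hN n hn
    rw [Real.dist_eq, sub_zero] at this
    exact this.le
  have T7a : Filter.Tendsto (fun n =>
      (Real.exp (((1 - aq * θf n)⁻¹ / (1 - ap * θf n)⁻¹)
        * ((∫ x, f x ^ ((1 - ap * θf n)⁻¹) ∂μ) - 1)) - 1
        - ((1 - aq * θf n)⁻¹ / (1 - ap * θf n)⁻¹)
        * ((∫ x, f x ^ ((1 - ap * θf n)⁻¹) ∂μ) - 1))/θf n) atTop (𝓝 0) := by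
    have hg : Filter.Tendsto (fun n =>
        |(((1 - aq * θf n)⁻¹ / (1 - ap * θf n)⁻¹)
          * ((∫ x, f x ^ ((1 - ap * θf n)⁻¹) ∂μ) - 1))/θf n
          * (((1 - aq * θf n)⁻¹ / (1 - ap * θf n)⁻¹)
          * ((∫ x, f x ^ ((1 - ap * θf n)⁻¹) ∂μ) - 1))|) atTop (𝓝 0) := by
      have h := (Tu2.mul Tu).abs
      rw [mul_zero, abs_zero] at h
      exact h
    refine squeeze_zero_norm' ?_ hg
    filter_upwards [hev] with n hn
    set w := ((1 - aq * θf n)⁻¹ / (1 - ap * θf n)⁻¹)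
      * ((∫ x, f x ^ ((1 - ap * θf n)⁻¹) ∂μ) - 1) with hw
    rw [Real.norm_eq_abs, abs_div, abs_of_pos (hθpos n)]
    have h1 : |Real.exp w - 1 - w| ≤ w ^ 2 := Real.abs_exp_sub_one_sub_id_le hn
    calc |Real.exp w - 1 - w| / θf n ≤ w ^ 2 / θf n :=
          (div_le_div_iff_of_pos_right (hθpos n)).mpr h1
      _ = |w / θf n * w| := by
          rw [abs_mul, abs_div, abs_of_pos (hθpos n), ← sq_abs w]
          ring
  have T7 : Filter.Tendsto (fun n =>
      (Real.exp (((1 - aq * θf n)⁻¹ / (1 - ap * θf n)⁻¹)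
        * ((∫ x, f x ^ ((1 - ap * θf n)⁻¹) ∂μ) - 1)) - 1)/θf n) atTop (𝓝 (ap * Ef)) := by
    have h := T7a.add Tu2
    rw [zero_add] at h
    refine h.congr fun n => ?_
    rw [← add_div]
    congr 1
    ring
  have T8 : Filter.Tendsto (fun n => (((1 - aq * θf n)⁻¹ - 1)/θf n) * Eh)
      atTop (𝓝 (aq * Eh)) := (Tgen aq haq0 haq1).mul_const Eh
  have key : aq * Eh ≤ ap * Ef := le_of_tendsto_of_tendsto' T8 T7 hmain
  rw [div_mul_eq_mul_div, le_div_iff₀ haq0]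
  calc Eh * aq = aq * Eh := mul_comm _ _
    _ ≤ ap * Ef := key

end Contraction

end AuxStatement1

set_option maxHeartbeats 1000000 in
/-- If a Markov semigroup with invariant probability measure `μ` is
hypercontractive from `L^p` to `L^q` (`1 < p < q < ∞`) at some time `t₁ > 0`, then there exist
constants `c̃, λ̃ > 0`, depending only on `t₁, p, q`, such that for every bounded measurable
probability density `f` (i.e. `f > 0`, `μ(f) = 1`) and every `t ≥ 0`,
`∫ (P_t f) log (P_t f) dμ ≤ c̃ e^{-λ̃ t} ∫ f log f dμ`. -/
theorem statement_1 (p q : ℝ≥0∞) (hp : 1 < p) (hpq : p < q) (hq : q < ∞)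
    (t₁ : ℝ) (ht₁ : 0 < t₁) :
    ∃ ctilde lamtilde : ℝ, 0 < ctilde ∧ 0 < lamtilde ∧
      ∀ (E : Type) [MeasurableSpace E] (μ : Measure E) [IsProbabilityMeasure μ]
        (κ : ℝ → Kernel E E),
        IsMarkovSemigroup κ →
        -- invariance of μ
        (∀ t : ℝ, 0 ≤ t → μ.bind (fun x => κ t x) = μ) →
        -- hypercontractivity at time t₁
        (∀ f : E → ℝ, BddMeasurableFn f →
          eLpNorm (kernelOp (κ t₁) f) q μ ≤ eLpNorm f p μ) →
        -- exponential decay of entropy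
        ∀ f : E → ℝ, BddMeasurableFn f → (∀ x, 0 < f x) → (∫ x, f x ∂μ) = 1 →
          ∀ t : ℝ, 0 ≤ t →
            ∫ x, kernelOp (κ t) f x * Real.log (kernelOp (κ t) f x) ∂μ
              ≤ ctilde * Real.exp (-lamtilde * t) * ∫ x, f x * Real.log (f x) ∂μ := by
  have hp_ne_top : p ≠ ∞ := (hpq.trans hq).ne
  have hq_ne_top : q ≠ ∞ := hq.ne
  have hpr1 : 1 < p.toReal := by
    rw [← ENNReal.toReal_one]
    exact ENNReal.toReal_strict_mono hp_ne_top hp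
  have hqr1 : 1 < q.toReal := by
    rw [← ENNReal.toReal_one]
    exact ENNReal.toReal_strict_mono hq_ne_top (hp.trans hpq)
  have hprqr : p.toReal < q.toReal := ENNReal.toReal_strict_mono hq_ne_top hpq
  have hpr0 : 0 < p.toReal := lt_trans one_pos hpr1
  have hqr0 : 0 < q.toReal := lt_trans one_pos hqr1
  have hinvpr1 : 1/p.toReal < 1 := by rw [div_lt_one hpr0]; exact hpr1
  have hinvqr1 : 1/q.toReal < 1 := by rw [div_lt_one hqr0]; exact hqr1
  have hinvpq : 1/q.toReal < 1/p.toReal := one_div_lt_one_div_of_lt hpr0 hprqr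
  have hap0 : 0 < 1 - 1/p.toReal := by linarith
  have haq0 : 0 < 1 - 1/q.toReal := by linarith
  have hapaq : 1 - 1/p.toReal < 1 - 1/q.toReal := by linarith
  have hθc0 : 0 < (1 - 1/p.toReal)/(1 - 1/q.toReal) := div_pos hap0 haq0
  have hθc1 : (1 - 1/p.toReal)/(1 - 1/q.toReal) < 1 := by
    rw [div_lt_one haq0]; exact hapaq
  have hct1 : 1 < (1 - 1/q.toReal)/(1 - 1/p.toReal) := by
    rw [lt_div_iff₀ hap0]; linarith
  have hct0 : 0 < (1 - 1/q.toReal)/(1 - 1/p.toReal) := lt_trans one_pos hct1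
  have hL0 : 0 < Real.log ((1 - 1/q.toReal)/(1 - 1/p.toReal)) := Real.log_pos hct1
  refine ⟨(1 - 1/q.toReal)/(1 - 1/p.toReal),
    Real.log ((1 - 1/q.toReal)/(1 - 1/p.toReal)) / t₁,
    hct0, div_pos hL0 ht₁, ?_⟩
  intro E _ μ _ κ hsem hinv hHC f hbdd hfpos hfint t ht
  obtain ⟨hfmeas, C₀, hC₀⟩ := hbdd
  have h1C : 1 ≤ max C₀ 1 := le_max_right _ _
  have habs : ∀ x, |f x| ≤ max C₀ 1 := fun x => (hC₀ x).trans (le_max_left _ _)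
  have hCle : ∀ x, f x ≤ max C₀ 1 := fun x => (le_abs_self _).trans (habs x)
  have hEf0 : 0 ≤ ∫ x, f x * Real.log (f x) ∂μ :=
    entropy_nonneg μ hfmeas h1C hfpos hCle hfint
  -- iteration at multiples of t₁
  have iter : ∀ n : ℕ,
      ∫ x, kernelOp (κ ((n:ℝ)*t₁)) f x * Real.log (kernelOp (κ ((n:ℝ)*t₁)) f x) ∂μ
        ≤ ((1 - 1/p.toReal)/(1 - 1/q.toReal))^n * ∫ x, f x * Real.log (f x) ∂μ := by
    intro n
    induction n with
    | zero =>
      simp only [Nat.cast_zero, zero_mul, hsem.id_zero, pow_zero, one_mul]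
      have hid : ∀ x, kernelOp Kernel.id f x = f x := by
        intro x
        rw [kernelOp, Kernel.id_apply, integral_dirac' f x hfmeas.stronglyMeasurable]
      rw [integral_congr_ae (Filter.Eventually.of_forall fun x => by rw [hid x])]
    | succ n ih =>
      haveI := hsem.markov ((n:ℝ)*t₁)
      haveI := hsem.markov t₁
      have hcast : ((n+1:ℕ):ℝ) * t₁ = (n:ℝ)*t₁ + t₁ := by push_cast; ring
      have hk : κ (((n+1:ℕ):ℝ) * t₁) = κ ((n:ℝ)*t₁) ∘ₖ κ t₁ := by
        rw [hcast]
        exact hsem.semigroup t₁ ((n:ℝ)*t₁) ht₁.le (by positivity)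
      have hg_meas : Measurable (kernelOp (κ ((n:ℝ)*t₁)) f) := kernelOp_measurable _ hfmeas
      have hg_pos : ∀ x, 0 < kernelOp (κ ((n:ℝ)*t₁)) f x := kernelOp_pos _ hfmeas habs hfpos
      have hg_le : ∀ x, kernelOp (κ ((n:ℝ)*t₁)) f x ≤ max C₀ 1 := fun x =>
        (le_abs_self _).trans (kernelOp_abs_le _ habs x)
      have hg_int : ∫ x, kernelOp (κ ((n:ℝ)*t₁)) f x ∂μ = 1 := by
        rw [kernelOp_integral_inv μ _ (hinv _ (by positivity)) hfmeas habs, hfint]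
      have hrw : ∀ x, kernelOp (κ (((n+1:ℕ):ℝ)*t₁)) f x
          = kernelOp (κ t₁) (kernelOp (κ ((n:ℝ)*t₁)) f) x := by
        intro x
        rw [hk]
        exact kernelOp_comp _ _ hfmeas habs x
      rw [integral_congr_ae (Filter.Eventually.of_forall fun x => by rw [hrw x])]
      have hcontr := entropy_contraction μ (κ t₁) (hinv t₁ ht₁.le) p.toReal q.toReal
        hpr1 hprqr hg_meas h1C hg_pos hg_le hg_int
        (fun θ h0 h1 => interpolation_step μ (κ t₁) (hinv t₁ ht₁.le) p q hp hpq hq hHC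
          hg_meas h1C hg_pos hg_le h0 h1)
      calc ∫ x, kernelOp (κ t₁) (kernelOp (κ ((n:ℝ)*t₁)) f) x
              * Real.log (kernelOp (κ t₁) (kernelOp (κ ((n:ℝ)*t₁)) f) x) ∂μ
          ≤ ((1 - 1/p.toReal)/(1 - 1/q.toReal))
              * ∫ x, kernelOp (κ ((n:ℝ)*t₁)) f x
                  * Real.log (kernelOp (κ ((n:ℝ)*t₁)) f x) ∂μ := hcontr
        _ ≤ ((1 - 1/p.toReal)/(1 - 1/q.toReal))
              * (((1 - 1/p.toReal)/(1 - 1/q.toReal))^n * ∫ x, f x * Real.log (f x) ∂μ) :=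
            mul_le_mul_of_nonneg_left ih hθc0.le
        _ = ((1 - 1/p.toReal)/(1 - 1/q.toReal))^(n+1) * ∫ x, f x * Real.log (f x) ∂μ := by
            ring
  -- now an arbitrary time t ≥ 0
  have hnle : ((⌊t/t₁⌋₊:ℝ))*t₁ ≤ t := by
    have h1 : ((⌊t/t₁⌋₊:ℝ)) ≤ t/t₁ := Nat.floor_le (by positivity)
    calc ((⌊t/t₁⌋₊:ℝ))*t₁ ≤ (t/t₁)*t₁ := mul_le_mul_of_nonneg_right h1 ht₁.le
      _ = t := div_mul_cancel₀ t ht₁.ne'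
  have hr0 : 0 ≤ t - (⌊t/t₁⌋₊:ℝ)*t₁ := by linarith
  haveI := hsem.markov ((⌊t/t₁⌋₊:ℝ)*t₁)
  haveI := hsem.markov (t - (⌊t/t₁⌋₊:ℝ)*t₁)
  have hk : κ t = κ ((⌊t/t₁⌋₊:ℝ)*t₁) ∘ₖ κ (t - (⌊t/t₁⌋₊:ℝ)*t₁) := by
    have h1 := hsem.semigroup (t - (⌊t/t₁⌋₊:ℝ)*t₁) ((⌊t/t₁⌋₊:ℝ)*t₁) hr0 (by positivity)
    rw [show (⌊t/t₁⌋₊:ℝ)*t₁ + (t - (⌊t/t₁⌋₊:ℝ)*t₁) = t by ring] at h1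
    exact h1
  have hg_meas : Measurable (kernelOp (κ ((⌊t/t₁⌋₊:ℝ)*t₁)) f) := kernelOp_measurable _ hfmeas
  have hg_pos : ∀ x, 0 < kernelOp (κ ((⌊t/t₁⌋₊:ℝ)*t₁)) f x := kernelOp_pos _ hfmeas habs hfpos
  have hg_le : ∀ x, kernelOp (κ ((⌊t/t₁⌋₊:ℝ)*t₁)) f x ≤ max C₀ 1 := fun x =>
    (le_abs_self _).trans (kernelOp_abs_le _ habs x)
  have hrw : ∀ x, kernelOp (κ t) f x
      = kernelOp (κ (t - (⌊t/t₁⌋₊:ℝ)*t₁)) (kernelOp (κ ((⌊t/t₁⌋₊:ℝ)*t₁)) f) x := by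
    intro x
    rw [hk]
    exact kernelOp_comp _ _ hfmeas habs x
  rw [integral_congr_ae (Filter.Eventually.of_forall fun x => by rw [hrw x])]
  have hDP := entropy_le_of_kernel μ (κ (t - (⌊t/t₁⌋₊:ℝ)*t₁)) (hinv _ hr0)
    hg_meas h1C hg_pos hg_le
  have hiter := iter ⌊t/t₁⌋₊
  -- bound the geometric factor
  have hbound : ((1 - 1/p.toReal)/(1 - 1/q.toReal))^(⌊t/t₁⌋₊)
      ≤ ((1 - 1/q.toReal)/(1 - 1/p.toReal))
        * Real.exp (-(Real.log ((1 - 1/q.toReal)/(1 - 1/p.toReal)) / t₁) * t) := by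
    have hlogc : Real.log ((1 - 1/p.toReal)/(1 - 1/q.toReal))
        = - Real.log ((1 - 1/q.toReal)/(1 - 1/p.toReal)) := by
      rw [show (1 - 1/p.toReal)/(1 - 1/q.toReal)
        = ((1 - 1/q.toReal)/(1 - 1/p.toReal))⁻¹ by rw [inv_div], Real.log_inv]
    have hexp : ((1 - 1/p.toReal)/(1 - 1/q.toReal))^(⌊t/t₁⌋₊)
        = Real.exp ((⌊t/t₁⌋₊:ℝ) * Real.log ((1 - 1/p.toReal)/(1 - 1/q.toReal))) := by
      rw [Real.exp_nat_mul, Real.exp_log hθc0]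
    have hrhs : ((1 - 1/q.toReal)/(1 - 1/p.toReal))
        * Real.exp (-(Real.log ((1 - 1/q.toReal)/(1 - 1/p.toReal)) / t₁) * t)
        = Real.exp (-(Real.log ((1 - 1/q.toReal)/(1 - 1/p.toReal)) / t₁) * t
            + Real.log ((1 - 1/q.toReal)/(1 - 1/p.toReal))) := by
      rw [Real.exp_add, Real.exp_log hct0]
      ring
    rw [hexp, hrhs]
    apply Real.exp_le_exp.mpr
    rw [hlogc]
    have htlt : t < ((⌊t/t₁⌋₊:ℝ)+1)*t₁ := by
      have h1 : t/t₁ < (⌊t/t₁⌋₊:ℝ)+1 := Nat.lt_floor_add_one (t/t₁)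
      calc t = (t/t₁)*t₁ := (div_mul_cancel₀ t ht₁.ne').symm
        _ < ((⌊t/t₁⌋₊:ℝ)+1)*t₁ := by
            exact mul_lt_mul_of_pos_right h1 ht₁
    have h2 : Real.log ((1 - 1/q.toReal)/(1 - 1/p.toReal)) * t / t₁
        ≤ Real.log ((1 - 1/q.toReal)/(1 - 1/p.toReal)) * (((⌊t/t₁⌋₊:ℝ)+1)*t₁) / t₁ :=
      (div_le_div_iff_of_pos_right ht₁).mpr (mul_le_mul_of_nonneg_left htlt.le hL0.le)
    have h3 : Real.log ((1 - 1/q.toReal)/(1 - 1/p.toReal)) * (((⌊t/t₁⌋₊:ℝ)+1)*t₁) / t₁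
        = Real.log ((1 - 1/q.toReal)/(1 - 1/p.toReal)) * ((⌊t/t₁⌋₊:ℝ)+1) := by
      field_simp
    have h4 : -(Real.log ((1 - 1/q.toReal)/(1 - 1/p.toReal)) / t₁) * t
        = -(Real.log ((1 - 1/q.toReal)/(1 - 1/p.toReal)) * t / t₁) := by ring
    linarith
  calc ∫ x, kernelOp (κ (t - (⌊t/t₁⌋₊:ℝ)*t₁)) (kernelOp (κ ((⌊t/t₁⌋₊:ℝ)*t₁)) f) x
          * Real.log (kernelOp (κ (t - (⌊t/t₁⌋₊:ℝ)*t₁))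
              (kernelOp (κ ((⌊t/t₁⌋₊:ℝ)*t₁)) f) x) ∂μ
      ≤ ∫ x, kernelOp (κ ((⌊t/t₁⌋₊:ℝ)*t₁)) f x
          * Real.log (kernelOp (κ ((⌊t/t₁⌋₊:ℝ)*t₁)) f x) ∂μ := hDP
    _ ≤ ((1 - 1/p.toReal)/(1 - 1/q.toReal))^(⌊t/t₁⌋₊)
          * ∫ x, f x * Real.log (f x) ∂μ := hiter
    _ ≤ (((1 - 1/q.toReal)/(1 - 1/p.toReal))
          * Real.exp (-(Real.log ((1 - 1/q.toReal)/(1 - 1/p.toReal)) / t₁) * t))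
          * ∫ x, f x * Real.log (f x) ∂μ :=
        mul_le_mul_of_nonneg_right hbound hEf0
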